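/- Kronecker scaling lemma (generalized DG-scaling): let X*, Y*, Z* be symmetric n×n real matrices, D a symmetric positive definite 2×2 matrix, and G a skew-symmetric 2×2 matrix. Define Θ as the block matrix [[X*⊗D, Y*⊗D + I⊗G],[Y*⊗D - I⊗G, Z*⊗D]]. Then for every symmetric n×n matrix Δ satisfying [I, Δ]·[[X*,Y*],[Y*,Z*]]·[I;Δ] ⪯ 0, it holds that [I, Δ⊗I₂]·Θ·[I; Δ⊗I₂] ⪯ 0. -/

import Mathlib

open Matrix Kronecker

lemma psd_kron {n : ℕ} {A : Matrix (Fin n) (Fin n) ℝ} {B : Matrix (Fin 2) (Fin 2) ℝ}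
    (hA : A.PosSemidef) (hB : B.PosSemidef) : (A ⊗ₖ B).PosSemidef := by
  exact hA.kronecker hB

theorem generalized_DG_scaling {n : ℕ}
    (X Y Z : Matrix (Fin n) (Fin n) ℝ)
    (hX : Xᵀ = X) (hY : Yᵀ = Y) (hZ : Zᵀ = Z)
    (D : Matrix (Fin 2) (Fin 2) ℝ) (hD : D.PosDef) (hDsym : Dᵀ = D)
    (G : Matrix (Fin 2) (Fin 2) ℝ) (hG : Gᵀ = -G)
    (Δ : Matrix (Fin n) (Fin n) ℝ) (hΔ : Δᵀ = Δ)
    (hquad : (-(X + Δ * Y + Y * Δ + Δ * Z * Δ)).PosSemidef) :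
    (-(X ⊗ₖ D
        + (Y ⊗ₖ D + (1 : Matrix (Fin n) (Fin n) ℝ) ⊗ₖ G)
            * (Δ ⊗ₖ (1 : Matrix (Fin 2) (Fin 2) ℝ))
        + (Δ ⊗ₖ (1 : Matrix (Fin 2) (Fin 2) ℝ))
            * (Y ⊗ₖ D - (1 : Matrix (Fin n) (Fin n) ℝ) ⊗ₖ G)
        + (Δ ⊗ₖ (1 : Matrix (Fin 2) (Fin 2) ℝ)) * (Z ⊗ₖ D)
            * (Δ ⊗ₖ (1 : Matrix (Fin 2) (Fin 2) ℝ)))).PosSemidef := by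
  have key : (X ⊗ₖ D
        + (Y ⊗ₖ D + (1 : Matrix (Fin n) (Fin n) ℝ) ⊗ₖ G)
            * (Δ ⊗ₖ (1 : Matrix (Fin 2) (Fin 2) ℝ))
        + (Δ ⊗ₖ (1 : Matrix (Fin 2) (Fin 2) ℝ))
            * (Y ⊗ₖ D - (1 : Matrix (Fin n) (Fin n) ℝ) ⊗ₖ G)
        + (Δ ⊗ₖ (1 : Matrix (Fin 2) (Fin 2) ℝ)) * (Z ⊗ₖ D)
            * (Δ ⊗ₖ (1 : Matrix (Fin 2) (Fin 2) ℝ)))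
      = (X + Δ * Y + Y * Δ + Δ * Z * Δ) ⊗ₖ D := by
    simp only [Matrix.add_mul, Matrix.mul_add, Matrix.sub_mul, Matrix.mul_sub,
      ← Matrix.mul_kronecker_mul, Matrix.add_kronecker, Matrix.mul_one, Matrix.one_mul]
    abel
  have hneg : -((X + Δ * Y + Y * Δ + Δ * Z * Δ) ⊗ₖ D)
      = (-(X + Δ * Y + Y * Δ + Δ * Z * Δ)) ⊗ₖ D := by
    ext i j; simp [Matrix.kroneckerMap_apply]; ring
  rw [key, hneg]
  exact psd_kron hquad hD.posSemidef
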